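/- Let N ≥ 2, C₂ ∈ ℝ, and set C := C₂/2. For x ∈ ℝᴺ with pairwise distinct coordinates and 1 ≤ i ≤ N define F^{N,i}(x) := (x^i)²/8 + (C₂/(N−1)²) ∑_{k≠i} 1/(x^i − x^k)² and F^N(x) := ‖x‖²/8 + (C/(N−1)²) ∑_{ℓ=1}^N ∑_{k≠ℓ} 1/(x^ℓ − x^k)². Then for every 1 ≤ i ≤ N, every x ∈ ℝᴺ with pairwise distinct coordinates, and every y ∈ ℝ such that the vector x′ obtained from x by replacing the i-th coordinate with y also has pairwise distinct coordinates, one has F^N(x′) − F^N(x) = F^{N,i}(x′) − F^{N,i}(x). -/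
import Mathlib

open Finset

lemma double_sum_split {N : ℕ} (i : Fin N) (x : Fin N → ℝ) :
    ∑ l, ∑ k ∈ univ.erase l, ((x l - x k) ^ 2)⁻¹
      = 2 * ∑ k ∈ univ.erase i, ((x i - x k) ^ 2)⁻¹
        + ∑ l ∈ univ.erase i, ∑ k ∈ (univ.erase l).erase i, ((x l - x k) ^ 2)⁻¹ := by
  rw [← Finset.sum_erase_add _ _ (Finset.mem_univ i)]
  have h1 : ∀ l ∈ univ.erase i, ∑ k ∈ univ.erase l, ((x l - x k) ^ 2)⁻¹
      = ((x l - x i) ^ 2)⁻¹ + ∑ k ∈ (univ.erase l).erase i, ((x l - x k) ^ 2)⁻¹ := by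
    intro l hl
    have hli : i ∈ univ.erase l := by
      simp [Finset.mem_erase]
      exact fun h => (Finset.mem_erase.mp hl).1 h.symm
    rw [← Finset.sum_erase_add _ _ hli]
    ring
  rw [Finset.sum_congr rfl h1, Finset.sum_add_distrib]
  have h2 : ∑ l ∈ univ.erase i, ((x l - x i) ^ 2)⁻¹
      = ∑ k ∈ univ.erase i, ((x i - x k) ^ 2)⁻¹ := by
    apply Finset.sum_congr rfl
    intro k _
    rw [show x k - x i = -(x i - x k) by ring, neg_sq]
  rw [h2]; ring

theorem dyson_potential_structure (N : ℕ) (hN : 2 ≤ N) (C₂ C : ℝ) (hC : C = C₂ / 2)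
    (F : Fin N → (Fin N → ℝ) → ℝ)
    (hF : ∀ i x, F i x = (x i) ^ 2 / 8
      + C₂ / ((N : ℝ) - 1) ^ 2 * ∑ k ∈ univ.erase i, ((x i - x k) ^ 2)⁻¹)
    (G : (Fin N → ℝ) → ℝ)
    (hG : ∀ x, G x = (∑ l, (x l) ^ 2) / 8
      + C / ((N : ℝ) - 1) ^ 2 * ∑ l, ∑ k ∈ univ.erase l, ((x l - x k) ^ 2)⁻¹)
    (i : Fin N) (x : Fin N → ℝ) (hx : Function.Injective x) (y : ℝ)
    (hx' : Function.Injective (Function.update x i y)) :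
    G (Function.update x i y) - G x = F i (Function.update x i y) - F i x := by
  set x' := Function.update x i y with hx'def
  have hxi' : x' i = y := Function.update_self i y x
  have hxl : ∀ l, l ≠ i → x' l = x l := fun l hl => Function.update_of_ne hl y x
  -- remainder sums equal
  have hR : ∑ l ∈ univ.erase i, ∑ k ∈ (univ.erase l).erase i, ((x' l - x' k) ^ 2)⁻¹
      = ∑ l ∈ univ.erase i, ∑ k ∈ (univ.erase l).erase i, ((x l - x k) ^ 2)⁻¹ := by
    apply Finset.sum_congr rfl
    intro l hl
    apply Finset.sum_congr rfl
    intro k hk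
    rw [hxl l (Finset.mem_erase.mp hl).1, hxl k (Finset.mem_erase.mp hk).1]
  -- norm sums
  have hS : ∑ l, (x' l) ^ 2 - ∑ l, (x l) ^ 2 = (x' i) ^ 2 - (x i) ^ 2 := by
    rw [← Finset.sum_erase_add univ (fun l => (x' l) ^ 2) (Finset.mem_univ i),
        ← Finset.sum_erase_add univ (fun l => (x l) ^ 2) (Finset.mem_univ i)]
    have : ∑ l ∈ univ.erase i, (x' l) ^ 2 = ∑ l ∈ univ.erase i, (x l) ^ 2 :=
      Finset.sum_congr rfl fun l hl => by rw [hxl l (Finset.mem_erase.mp hl).1]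
    rw [this]; ring
  rw [hG, hG, hF, hF, double_sum_split i x', double_sum_split i x, hR, hC]
  linear_combination hS / 8
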